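/- In ℂ(x)[∂], the operator L = ∂³ − (6/x²)∂ + 12/x³ + h commutes with A1 = ∂⁴ − (8/x²)∂² + (24/x³)∂ − 24/x⁴ for every complex constant h. -/

import Mathlib

open RatFunc
open Polynomial (derivative derivative_mul derivative_add)

/-- The derivation `d/dx` on the differential field `ℂ(x)` of rational functions,
given by the quotient rule on the (coprime) numerator and denominator. -/
noncomputable def ratD (f : RatFunc ℂ) : RatFunc ℂ :=
  (algebraMap (Polynomial ℂ) (RatFunc ℂ) (Polynomial.derivative f.num)
      * algebraMap (Polynomial ℂ) (RatFunc ℂ) f.denom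
    - algebraMap (Polynomial ℂ) (RatFunc ℂ) f.num
      * algebraMap (Polynomial ℂ) (RatFunc ℂ) (Polynomial.derivative f.denom))
    / algebraMap (Polynomial ℂ) (RatFunc ℂ) f.denom ^ 2

local notation "am" => algebraMap (Polynomial ℂ) (RatFunc ℂ)

lemma ratD_div_poly (p q : Polynomial ℂ) (hq : q ≠ 0) :
    ratD (am p / am q) =
      (am (derivative p) * am q - am p * am (derivative q)) / am q ^ 2 := by
  set f := am p / am q with hf
  have hd : f.denom ≠ 0 := f.denom_ne_zero
  have h : f.num * q = p * f.denom := by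
    apply RatFunc.algebraMap_injective ℂ
    have h1 : am f.num / am f.denom = am p / am q := f.num_div_denom
    rw [div_eq_div_iff (RatFunc.algebraMap_ne_zero hd) (RatFunc.algebraMap_ne_zero hq)] at h1
    simpa using h1
  have h' : derivative f.num * q + f.num * derivative q
      = derivative p * f.denom + p * derivative f.denom := by
    have := congrArg derivative h
    simpa [derivative_mul] using this
  rw [ratD, div_eq_div_iff (pow_ne_zero 2 (RatFunc.algebraMap_ne_zero hd))
      (pow_ne_zero 2 (RatFunc.algebraMap_ne_zero hq))]
  rw [← map_pow, ← map_pow, ← map_mul, ← map_mul, ← map_mul, ← map_mul, ← map_sub, ← map_sub,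
    ← map_mul, ← map_mul]
  refine congrArg _ ?_
  linear_combination (q * f.denom) * h' - (derivative q * f.denom + q * derivative f.denom) * h

lemma ratD_algebraMap (p : Polynomial ℂ) : ratD (am p) = am (derivative p) := by
  have := ratD_div_poly p 1 one_ne_zero
  simpa using this


lemma ratD_add' (p1 q1 p2 q2 : Polynomial ℂ) (h1 : q1 ≠ 0) (h2 : q2 ≠ 0) :
    ratD (am p1 / am q1 + am p2 / am q2) = ratD (am p1 / am q1) + ratD (am p2 / am q2) := by
  have hd1 := RatFunc.algebraMap_ne_zero h1
  have hd2 := RatFunc.algebraMap_ne_zero h2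
  have key : am p1 / am q1 + am p2 / am q2 = am (p1 * q2 + p2 * q1) / am (q1 * q2) := by
    rw [map_add, map_mul, map_mul, map_mul]
    field_simp
  rw [key, ratD_div_poly _ _ (mul_ne_zero h1 h2), ratD_div_poly _ _ h1, ratD_div_poly _ _ h2]
  simp only [derivative_mul, derivative_add, map_add, map_mul]
  field_simp
  ring

lemma ratD_add (f g : RatFunc ℂ) : ratD (f + g) = ratD f + ratD g := by
  rw [← f.num_div_denom, ← g.num_div_denom]
  exact ratD_add' _ _ _ _ f.denom_ne_zero g.denom_ne_zero

lemma ratD_mul' (p1 q1 p2 q2 : Polynomial ℂ) (h1 : q1 ≠ 0) (h2 : q2 ≠ 0) :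
    ratD (am p1 / am q1 * (am p2 / am q2)) =
      ratD (am p1 / am q1) * (am p2 / am q2) + am p1 / am q1 * ratD (am p2 / am q2) := by
  have hd1 := RatFunc.algebraMap_ne_zero h1
  have hd2 := RatFunc.algebraMap_ne_zero h2
  have key : am p1 / am q1 * (am p2 / am q2) = am (p1 * p2) / am (q1 * q2) := by
    rw [map_mul, map_mul]
    field_simp
  rw [key, ratD_div_poly _ _ (mul_ne_zero h1 h2), ratD_div_poly _ _ h1, ratD_div_poly _ _ h2]
  simp only [derivative_mul, derivative_add, map_add, map_mul]
  field_simp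
  ring

lemma ratD_mul (f g : RatFunc ℂ) : ratD (f * g) = ratD f * g + f * ratD g := by
  rw [← f.num_div_denom, ← g.num_div_denom]
  exact ratD_mul' _ _ _ _ f.denom_ne_zero g.denom_ne_zero

lemma ratD_C (c : ℂ) : ratD (RatFunc.C c) = 0 := by
  rw [← RatFunc.algebraMap_C, ratD_algebraMap]
  simp

lemma ratD_one : ratD 1 = 0 := by
  simpa using ratD_C 1

lemma ratD_ofNat (n : ℕ) [n.AtLeastTwo] : ratD (no_index (OfNat.ofNat n)) = 0 := by
  have : (OfNat.ofNat n : RatFunc ℂ) = RatFunc.C (OfNat.ofNat n) := by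
    simp [← RatFunc.algebraMap_C, map_ofNat]
  rw [this, ratD_C]

lemma ratD_X : ratD (RatFunc.X : RatFunc ℂ) = 1 := by
  rw [← RatFunc.algebraMap_X, ratD_algebraMap]
  simp

lemma ratD_neg (f : RatFunc ℂ) : ratD (-f) = -ratD f := by
  have h := ratD_add f (-f)
  have h0 : ratD (0 : RatFunc ℂ) = 0 := by simpa using ratD_C 0
  rw [add_neg_cancel, h0] at h
  linear_combination -h

lemma ratD_sub (f g : RatFunc ℂ) : ratD (f - g) = ratD f - ratD g := by
  rw [sub_eq_add_neg, ratD_add, ratD_neg, sub_eq_add_neg]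

lemma ratD_inv (f : RatFunc ℂ) : ratD f⁻¹ = -ratD f / f ^ 2 := by
  rcases eq_or_ne f 0 with rfl | hf
  · simp [show ratD (0 : RatFunc ℂ) = 0 by simpa using ratD_C 0]
  · have h := ratD_mul f f⁻¹
    rw [mul_inv_cancel₀ hf, ratD_one] at h
    have hinv : f * f⁻¹ = 1 := mul_inv_cancel₀ hf
    rw [eq_div_iff (pow_ne_zero 2 hf)]
    linear_combination (-f) * h - ratD f * hinv

lemma ratD_div (f g : RatFunc ℂ) : ratD (f / g) = (ratD f * g - f * ratD g) / g ^ 2 := by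
  rcases eq_or_ne g 0 with rfl | hg
  · simp [show ratD (0 : RatFunc ℂ) = 0 by simpa using ratD_C 0]
  · rw [div_eq_mul_inv, ratD_mul, ratD_inv]
    field_simp
    ring

lemma ratD_pow (f : RatFunc ℂ) (n : ℕ) : ratD (f ^ n) = n * f ^ (n - 1) * ratD f := by
  induction n with
  | zero => simpa using ratD_one
  | succ n ih =>
    rw [pow_succ, ratD_mul, ih]
    rcases n with _ | n
    · push_cast
      ring
    · push_cast
      ring


/-- The operator `L = ∂³ - (6/x²)∂ + 12/x³ + h`, acting on `ℂ(x)`. -/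
noncomputable def opL (h : ℂ) (f : RatFunc ℂ) : RatFunc ℂ :=
  ratD^[3] f - 6 / X ^ 2 * ratD f + (12 / X ^ 3 + RatFunc.C h) * f

/-- The operator `A₁ = ∂⁴ - (8/x²)∂² + (24/x³)∂ - 24/x⁴`. -/
noncomputable def opA1 (f : RatFunc ℂ) : RatFunc ℂ :=
  ratD^[4] f - 8 / X ^ 2 * ratD^[2] f + 24 / X ^ 3 * ratD f - 24 / X ^ 4 * f

lemma ratD_zero : ratD (0 : RatFunc ℂ) = 0 := by simpa using ratD_C 0

lemma ratD_natCast (n : ℕ) : ratD (n : RatFunc ℂ) = 0 := by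
  rw [← map_natCast (algebraMap (Polynomial ℂ) (RatFunc ℂ)) n, ratD_algebraMap]
  simp

lemma it2 (g : RatFunc ℂ) : ratD^[2] g = ratD (ratD g) := by
  rw [show (2:ℕ) = 1+1 from rfl, Function.iterate_succ_apply', Function.iterate_one]
lemma it3 (g : RatFunc ℂ) : ratD^[3] g = ratD (ratD (ratD g)) := by
  rw [show (3:ℕ) = 2+1 from rfl, Function.iterate_succ_apply', it2]
lemma it4 (g : RatFunc ℂ) : ratD^[4] g = ratD (ratD (ratD (ratD g))) := by
  rw [show (4:ℕ) = 3+1 from rfl, Function.iterate_succ_apply', it3]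

lemma ratD_Xinv : ratD (RatFunc.X⁻¹ : RatFunc ℂ) = -(RatFunc.X⁻¹ ^ 2) := by
  rw [ratD_inv, ratD_X]
  have hX : (RatFunc.X : RatFunc ℂ) ≠ 0 := RatFunc.X_ne_zero
  field_simp

set_option maxHeartbeats 4000000 in
/-- `L` and `A₁` commute in `ℂ(x)[∂]`. -/
theorem stmt4 (h : ℂ) : ∀ f : RatFunc ℂ, opL h (opA1 f) = opA1 (opL h f) := by
  intro f
  simp only [opL, opA1, it2, it3, it4, div_eq_mul_inv, ← inv_pow]
  simp only [ratD_sub, ratD_add, ratD_neg, ratD_mul, ratD_pow, ratD_Xinv, ratD_ofNat, ratD_C,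
    ratD_one, ratD_zero, ratD_natCast]
  push_cast
  ring
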